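/- Fix an integer k ≠ 0 and a real α ≥ 1. For every sufficiently smooth function f : [0,1) → ℂ with finite H¹ norm satisfying the no-flux boundary condition ∂_r f(1) = 0, the advection term B f = i r^α f and the radial Laplacian Δ_k = ∂_rr + (1/r)∂_r − k²/r² satisfy Re⟨B f, Δ_k f⟩ = −α Re⟨i r^{α−1} f, ∂_r f⟩ and hence |Re⟨B f, Δ_k f⟩| ≤ α ‖f‖_H ‖f‖_{H¹}. -/

import Mathlib

/-!
STATEMENT 18 (identity (5.31)–(5.33) in the proof of Theorem 5.6: the commutator
bound for the spiral advection against the radial Laplacian `Δ_k`).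
-/

open MeasureTheory intervalIntegral

noncomputable section

/-- Weighted `L²((0,1); r dr)` norm. -/
def wL2 (φ : ℝ → ℂ) : ℝ :=
  Real.sqrt (∫ r in (0 : ℝ)..1, ‖φ r‖ ^ 2 * r)

/-- Weighted `H¹` norm at angular frequency `k`. -/
def wH1 (k : ℤ) (φ : ℝ → ℂ) : ℝ :=
  Real.sqrt (∫ r in (0 : ℝ)..1, (‖deriv φ r‖ ^ 2 + (k : ℝ) ^ 2 / r ^ 2 * ‖φ r‖ ^ 2) * r)

/-- Weighted inner product `⟨φ,η⟩ = ∫₀¹ φ(r) conj(η(r)) r dr`. -/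
def wInner (φ η : ℝ → ℂ) : ℂ :=
  ∫ r in (0 : ℝ)..1, φ r * (starRingEnd ℂ) (η r) * (r : ℂ)

lemma cs_interval (u v : ℝ → ℝ) (hu : Continuous u) (hv : Continuous v) :
    ∫ r in (0:ℝ)..1, u r * v r ≤
      Real.sqrt (∫ r in (0:ℝ)..1, u r ^ 2) * Real.sqrt (∫ r in (0:ℝ)..1, v r ^ 2) := by
  set A := ∫ r in (0:ℝ)..1, u r ^ 2 with hA
  set B := ∫ r in (0:ℝ)..1, u r * v r with hB
  set C := ∫ r in (0:ℝ)..1, v r ^ 2 with hC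
  have hiu : IntervalIntegrable (fun r => u r ^ 2) volume 0 1 :=
    (hu.pow 2).intervalIntegrable 0 1
  have hiv : IntervalIntegrable (fun r => v r ^ 2) volume 0 1 :=
    (hv.pow 2).intervalIntegrable 0 1
  have hiuv : IntervalIntegrable (fun r => u r * v r) volume 0 1 :=
    (hu.mul hv).intervalIntegrable 0 1
  have key : ∀ t : ℝ, 0 ≤ A * (t * t) + 2 * B * t + C := by
    intro t
    have h1 : (∫ r in (0:ℝ)..1, (t * u r + v r) ^ 2) = A * (t * t) + 2 * B * t + C := by
      have hcongr : ∀ r, (t * u r + v r) ^ 2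
          = t * t * u r ^ 2 + 2 * t * (u r * v r) + v r ^ 2 := fun r => by ring
      rw [intervalIntegral.integral_congr (g := fun r =>
          t * t * u r ^ 2 + 2 * t * (u r * v r) + v r ^ 2) (fun r _ => hcongr r),
        intervalIntegral.integral_add ((hiu.const_mul _).add (hiuv.const_mul _)) hiv,
        intervalIntegral.integral_add (hiu.const_mul _) (hiuv.const_mul _),
        intervalIntegral.integral_const_mul, intervalIntegral.integral_const_mul]
      ring
    have h2 : 0 ≤ ∫ r in (0:ℝ)..1, (t * u r + v r) ^ 2 :=
      intervalIntegral.integral_nonneg zero_le_one (fun r _ => sq_nonneg _)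
    linarith [h1 ▸ h2]
  have hd := discrim_le_zero key
  have hA0 : 0 ≤ A := intervalIntegral.integral_nonneg zero_le_one (fun r _ => sq_nonneg _)
  have hC0 : 0 ≤ C := intervalIntegral.integral_nonneg zero_le_one (fun r _ => sq_nonneg _)
  have hBsq : B ^ 2 ≤ A * C := by
    simp only [discrim] at hd; nlinarith
  calc B ≤ |B| := le_abs_self B
    _ = Real.sqrt (B ^ 2) := (Real.sqrt_sq_eq_abs B).symm
    _ ≤ Real.sqrt (A * C) := Real.sqrt_le_sqrt hBsq
    _ = Real.sqrt A * Real.sqrt C := Real.sqrt_mul hA0 C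

lemma deriv_stuff (f : ℝ → ℂ) (hf : ContDiff ℝ 2 f) :
    Differentiable ℝ f ∧ Differentiable ℝ (deriv f) ∧ Continuous (deriv (deriv f)) := by
  have h2 : ContDiff ℝ ((1:ℕ∞)+1) f := by norm_num; exact hf
  rw [contDiff_succ_iff_deriv] at h2
  exact ⟨h2.1, h2.2.2.differentiable (by norm_num), h2.2.2.continuous_deriv le_rfl⟩

lemma hG_deriv (f : ℝ → ℂ) (hf : ContDiff ℝ 2 f) (r : ℝ) :
    HasDerivAt (fun r => (Complex.I * f r * (starRingEnd ℂ) (deriv f r)).re)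
      ((Complex.I * f r * (starRingEnd ℂ) (deriv (deriv f) r)).re) r := by
  obtain ⟨h1, h2, _⟩ := deriv_stuff f hf
  have hdf : HasDerivAt f (deriv f r) r := (h1 r).hasDerivAt
  have hddf : HasDerivAt (deriv f) (deriv (deriv f) r) r := (h2 r).hasDerivAt
  have hconj : HasDerivAt (fun r => (starRingEnd ℂ) (deriv f r))
      ((starRingEnd ℂ) (deriv (deriv f) r)) r := by
    simpa only [RCLike.star_def] using hddf.star
  have hF : HasDerivAt (fun r => Complex.I * f r * (starRingEnd ℂ) (deriv f r))
      (Complex.I * deriv f r * (starRingEnd ℂ) (deriv f r)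
        + Complex.I * f r * (starRingEnd ℂ) (deriv (deriv f) r)) r :=
    (hdf.const_mul Complex.I).mul hconj
  have h : HasDerivAt (fun r => (Complex.I * f r * (starRingEnd ℂ) (deriv f r)).re)
      (Complex.reCLM (Complex.I * deriv f r * (starRingEnd ℂ) (deriv f r)
        + Complex.I * f r * (starRingEnd ℂ) (deriv (deriv f) r))) r :=
    Complex.reCLM.hasFDerivAt.comp_hasDerivAt r hF
  convert h using 1
  simp [Complex.add_re, Complex.mul_re, Complex.conj_re, Complex.conj_im]
  ring

theorem spiral_commutator_bound
    (α : ℝ) (hα : 1 ≤ α) (k : ℤ) (hk : k ≠ 0)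
    (f : ℝ → ℂ) (hf : ContDiff ℝ 2 f)
    -- finite `H¹` norm
    (hfH1 : IntervalIntegrable
      (fun r => (‖deriv f r‖ ^ 2 + (k : ℝ) ^ 2 / r ^ 2 * ‖f r‖ ^ 2) * r) volume 0 1)
    -- no-flux boundary condition
    (hbc : deriv f 1 = 0) :
    (wInner (fun r => Complex.I * ((r ^ α : ℝ) : ℂ) * f r)
        (fun r => deriv (deriv f) r + (1 / (r : ℂ)) * deriv f r -
          (((k : ℝ) ^ 2 / r ^ 2 : ℝ) : ℂ) * f r)).re =
      -α * (wInner (fun r => Complex.I * ((r ^ (α - 1) : ℝ) : ℂ) * f r)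
        (fun r => deriv f r)).re ∧
    |(wInner (fun r => Complex.I * ((r ^ α : ℝ) : ℂ) * f r)
        (fun r => deriv (deriv f) r + (1 / (r : ℂ)) * deriv f r -
          (((k : ℝ) ^ 2 / r ^ 2 : ℝ) : ℂ) * f r)).re| ≤
      α * wL2 f * wH1 k f := by
  obtain ⟨h1, h2, hf''c⟩ := deriv_stuff f hf
  have hfc : Continuous f := h1.continuous
  have hf'c : Continuous (deriv f) := h2.continuous
  set G : ℝ → ℝ := fun r => (Complex.I * f r * (starRingEnd ℂ) (deriv f r)).re with hGdef
  set Gd : ℝ → ℝ := fun r => (Complex.I * f r * (starRingEnd ℂ) (deriv (deriv f) r)).re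
    with hGddef
  have hGc : Continuous G := by
    apply Complex.continuous_re.comp
    exact (continuous_const.mul hfc).mul (Complex.continuous_conj.comp hf'c)
  have hGdc : Continuous Gd := by
    apply Complex.continuous_re.comp
    exact (continuous_const.mul hfc).mul (Complex.continuous_conj.comp hf''c)
  have hdra : Differentiable ℝ (fun r : ℝ => r ^ α) := fun r =>
    (Real.hasDerivAt_rpow_const (p := α) (Or.inr hα)).differentiableAt
  have hra : Continuous (fun r : ℝ => r ^ α) := hdra.continuous
  have hdra1 : Differentiable ℝ (fun r : ℝ => r ^ (α + 1)) := fun r =>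
    (Real.hasDerivAt_rpow_const (p := α + 1) (Or.inr (by linarith))).differentiableAt
  have hra1 : Continuous (fun r : ℝ => r ^ (α + 1)) := hdra1.continuous
  have hram1 : Continuous (fun r : ℝ => r ^ (α - 1)) :=
    continuous_iff_continuousAt.mpr fun r =>
      Real.continuousAt_rpow_const r _ (Or.inr (by linarith))
  -- the three pieces
  set T1 : ℝ → ℂ := fun r =>
    Complex.I * ((r ^ (α + 1) : ℝ) : ℂ) * f r * (starRingEnd ℂ) (deriv (deriv f) r) with hT1
  set T2 : ℝ → ℂ := fun r =>
    Complex.I * ((r ^ α : ℝ) : ℂ) * f r * (starRingEnd ℂ) (deriv f r) with hT2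
  set T3 : ℝ → ℂ := fun r =>
    -((((k : ℝ) ^ 2 * r ^ (α - 1) : ℝ)) : ℂ) * (Complex.I * (f r * (starRingEnd ℂ) (f r)))
    with hT3
  have hiT1 : IntervalIntegrable T1 volume 0 1 :=
    (((continuous_const.mul (Complex.continuous_ofReal.comp hra1)).mul hfc).mul
      (Complex.continuous_conj.comp hf''c)).intervalIntegrable 0 1
  have hiT2 : IntervalIntegrable T2 volume 0 1 :=
    (((continuous_const.mul (Complex.continuous_ofReal.comp hra)).mul hfc).mul
      (Complex.continuous_conj.comp hf'c)).intervalIntegrable 0 1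
  have hiT3 : IntervalIntegrable T3 volume 0 1 := by
    apply Continuous.intervalIntegrable
    exact (Complex.continuous_ofReal.comp (continuous_const.mul hram1)).neg.mul
      (continuous_const.mul (hfc.mul (Complex.continuous_conj.comp hfc)))
  -- decomposition of the left inner product
  have hLHS : wInner (fun r => Complex.I * ((r ^ α : ℝ) : ℂ) * f r)
      (fun r => deriv (deriv f) r + (1 / (r : ℂ)) * deriv f r -
        (((k : ℝ) ^ 2 / r ^ 2 : ℝ) : ℂ) * f r)
      = (∫ r in (0:ℝ)..1, T1 r) + (∫ r in (0:ℝ)..1, T2 r) + ∫ r in (0:ℝ)..1, T3 r := by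
    rw [wInner, ← intervalIntegral.integral_add hiT1 hiT2,
      ← intervalIntegral.integral_add (hiT1.add hiT2) hiT3]
    apply intervalIntegral.integral_congr_ae
    filter_upwards with r hr
    rw [Set.uIoc_of_le zero_le_one] at hr
    have hr0 : 0 < r := hr.1
    have hrne : (r : ℂ) ≠ 0 := by exact_mod_cast hr0.ne'
    have c1 : ((r ^ (α + 1) : ℝ) : ℂ) = ((r ^ α : ℝ) : ℂ) * (r : ℂ) := by
      rw [Real.rpow_add_one hr0.ne' α]; push_cast; ring
    have c2 : (((k : ℝ) ^ 2 * r ^ (α - 1) : ℝ) : ℂ)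
        = ((r ^ α : ℝ) : ℂ) * (((k : ℝ) ^ 2 / r ^ 2 : ℝ) : ℂ) * (r : ℂ) := by
      have : (r : ℝ) ^ α = r ^ (α - 1) * r := by
        rw [← Real.rpow_add_one hr0.ne' (α - 1)]; norm_num
      rw [this]; push_cast
      field_simp
    simp only [hT1, hT2, hT3, map_add, map_sub, map_mul, map_div₀, map_one,
      Complex.conj_ofReal, c1, c2]
    field_simp
    ring
  -- real parts of the three pieces
  have hreT1 : (∫ r in (0:ℝ)..1, T1 r).re = ∫ r in (0:ℝ)..1, r ^ (α + 1) * Gd r := by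
    rw [show (∫ r in (0:ℝ)..1, T1 r).re = Complex.reCLM (∫ r in (0:ℝ)..1, T1 r) from rfl,
      ← Complex.reCLM.intervalIntegral_comp_comm hiT1]
    apply intervalIntegral.integral_congr
    intro r _
    show (T1 r).re = _
    rw [show T1 r = ((r ^ (α + 1) : ℝ) : ℂ)
      * (Complex.I * f r * (starRingEnd ℂ) (deriv (deriv f) r)) by rw [hT1]; ring]
    exact Complex.re_ofReal_mul _ _
  have hreT2 : (∫ r in (0:ℝ)..1, T2 r).re = ∫ r in (0:ℝ)..1, r ^ α * G r := by
    rw [show (∫ r in (0:ℝ)..1, T2 r).re = Complex.reCLM (∫ r in (0:ℝ)..1, T2 r) from rfl,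
      ← Complex.reCLM.intervalIntegral_comp_comm hiT2]
    apply intervalIntegral.integral_congr
    intro r _
    show (T2 r).re = _
    rw [show T2 r = ((r ^ α : ℝ) : ℂ)
      * (Complex.I * f r * (starRingEnd ℂ) (deriv f r)) by rw [hT2]; ring]
    exact Complex.re_ofReal_mul _ _
  have hreT3 : (∫ r in (0:ℝ)..1, T3 r).re = 0 := by
    rw [show (∫ r in (0:ℝ)..1, T3 r).re = Complex.reCLM (∫ r in (0:ℝ)..1, T3 r) from rfl,
      ← Complex.reCLM.intervalIntegral_comp_comm hiT3]
    have hz : ∀ r ∈ Set.uIcc (0:ℝ) 1, Complex.reCLM (T3 r) = (fun _ : ℝ => (0:ℝ)) r := by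
      intro r _
      show (T3 r).re = 0
      simp only [hT3]
      simp [Complex.mul_conj, Complex.mul_re]
      exact Or.inl (Or.inl (by rw [sq, Complex.mul_im]; simp))
    rw [intervalIntegral.integral_congr hz, intervalIntegral.integral_zero]
  -- FTC computation
  have hU : ∀ r : ℝ, HasDerivAt (fun r => r ^ (α + 1) * G r)
      ((α + 1) * (r ^ α * G r) + r ^ (α + 1) * Gd r) r := by
    intro r
    have hu : HasDerivAt (fun x : ℝ => x ^ (α + 1)) ((α + 1) * r ^ α) r := by
      have := Real.hasDerivAt_rpow_const (x := r) (p := α + 1) (Or.inr (by linarith))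
      simpa using this
    have h : HasDerivAt (fun x => x ^ (α + 1) * G x)
        ((α + 1) * r ^ α * G r + r ^ (α + 1) * Gd r) r := hu.mul (hG_deriv f hf r)
    convert h using 1
    show (α + 1) * (r ^ α * G r) + r ^ (α + 1) * Gd r = _
    ring
  have hFTC : (∫ r in (0:ℝ)..1, ((α + 1) * (r ^ α * G r) + r ^ (α + 1) * Gd r)) = 0 := by
    rw [intervalIntegral.integral_eq_sub_of_hasDerivAt (fun r _ => hU r)
      (((continuous_const.mul (hra.mul hGc)).add (hra1.mul hGdc)).intervalIntegrable 0 1)]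
    have hG1 : G 1 = 0 := by simp [hGdef, hbc]
    rw [hG1, Real.zero_rpow (by linarith : α + 1 ≠ 0)]
    ring
  set Q : ℝ := ∫ r in (0:ℝ)..1, r ^ α * G r with hQ
  have hsplit : (∫ r in (0:ℝ)..1, r ^ (α + 1) * Gd r) = -((α + 1) * Q) := by
    rw [intervalIntegral.integral_add (f := fun r => (α + 1) * (r ^ α * G r))
      (g := fun r => r ^ (α + 1) * Gd r) ((((hra.mul hGc)).intervalIntegrable 0 1).const_mul _)
      ((hra1.mul hGdc).intervalIntegrable 0 1), intervalIntegral.integral_const_mul] at hFTC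
    rw [hQ] at *; linarith
  have hLre : (wInner (fun r => Complex.I * ((r ^ α : ℝ) : ℂ) * f r)
      (fun r => deriv (deriv f) r + (1 / (r : ℂ)) * deriv f r -
        (((k : ℝ) ^ 2 / r ^ 2 : ℝ) : ℂ) * f r)).re = -α * Q := by
    rw [hLHS, Complex.add_re, Complex.add_re, hreT1, hreT2, hreT3, hsplit]
    ring
  -- the right inner product
  have hRre : (wInner (fun r => Complex.I * ((r ^ (α - 1) : ℝ) : ℂ) * f r)
      (fun r => deriv f r)).re = Q := by
    have : wInner (fun r => Complex.I * ((r ^ (α - 1) : ℝ) : ℂ) * f r)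
        (fun r => deriv f r) = ∫ r in (0:ℝ)..1, T2 r := by
      rw [wInner]
      apply intervalIntegral.integral_congr_ae
      filter_upwards with r hr
      rw [Set.uIoc_of_le zero_le_one] at hr
      have hr0 : 0 < r := hr.1
      have c1 : ((r ^ α : ℝ) : ℂ) = ((r ^ (α - 1) : ℝ) : ℂ) * (r : ℂ) := by
        rw [show α = (α - 1) + 1 by ring, Real.rpow_add_one hr0.ne']
        push_cast; ring
      simp only [hT2]
      rw [c1]; ring
    rw [this, hreT2, hQ]
  refine ⟨by rw [hLre, hRre], ?_⟩
  -- the bound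
  rw [hLre]
  have hα0 : (0:ℝ) ≤ α := by linarith
  set u : ℝ → ℝ := fun r => ‖f r‖ * Real.sqrt r with hu
  set v : ℝ → ℝ := fun r => ‖deriv f r‖ * Real.sqrt r with hv
  have huc : Continuous u := hfc.norm.mul Real.continuous_sqrt
  have hvc : Continuous v := hf'c.norm.mul Real.continuous_sqrt
  have habs1 : |Q| ≤ ∫ r in (0:ℝ)..1, |r ^ α * G r| :=
    intervalIntegral.abs_integral_le_integral_abs zero_le_one
  have habs2 : (∫ r in (0:ℝ)..1, |r ^ α * G r|) ≤ ∫ r in (0:ℝ)..1, u r * v r := by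
    apply intervalIntegral.integral_mono_on zero_le_one
      ((hra.mul hGc).abs.intervalIntegrable 0 1) ((huc.mul hvc).intervalIntegrable 0 1)
    intro r hr
    obtain ⟨hr0, hr1⟩ := hr
    have hrp : (0:ℝ) ≤ r ^ α := Real.rpow_nonneg hr0 α
    have hGle : |G r| ≤ ‖f r‖ * ‖deriv f r‖ := by
      calc |G r| ≤ ‖Complex.I * f r * (starRingEnd ℂ) (deriv f r)‖ :=
            Complex.abs_re_le_norm _
        _ = ‖f r‖ * ‖deriv f r‖ := by
            simp [map_mul, Complex.norm_conj]
    have hrle : r ^ α ≤ r := by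
      rcases eq_or_lt_of_le hr0 with h | h
      · rw [← h, Real.zero_rpow (by linarith : α ≠ 0)]
      · calc r ^ α ≤ r ^ (1:ℝ) := Real.rpow_le_rpow_of_exponent_ge h hr1 hα
          _ = r := Real.rpow_one r
    calc |r ^ α * G r| = r ^ α * |G r| := by rw [abs_mul, abs_of_nonneg hrp]
      _ ≤ r ^ α * (‖f r‖ * ‖deriv f r‖) := by
          exact mul_le_mul_of_nonneg_left hGle hrp
      _ ≤ r * (‖f r‖ * ‖deriv f r‖) := by
          apply mul_le_mul_of_nonneg_right hrle (by positivity)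
      _ = u r * v r := by
          simp only [hu, hv]
          have hs : Real.sqrt r * Real.sqrt r = r := Real.mul_self_sqrt hr0
          linear_combination (-(‖f r‖ * ‖deriv f r‖)) * hs
  have habs3 := cs_interval u v huc hvc
  have hL2 : Real.sqrt (∫ r in (0:ℝ)..1, u r ^ 2) = wL2 f := by
    rw [wL2]
    congr 1
    apply intervalIntegral.integral_congr
    intro r hr
    rw [Set.uIcc_of_le zero_le_one] at hr
    rw [hu]
    simp only
    rw [mul_pow, Real.sq_sqrt hr.1]
  have hH1 : Real.sqrt (∫ r in (0:ℝ)..1, v r ^ 2) ≤ wH1 k f := by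
    rw [wH1]
    apply Real.sqrt_le_sqrt
    have hcg : (∫ r in (0:ℝ)..1, v r ^ 2) = ∫ r in (0:ℝ)..1, ‖deriv f r‖ ^ 2 * r := by
      apply intervalIntegral.integral_congr
      intro r hr
      rw [Set.uIcc_of_le zero_le_one] at hr
      simp only [hv]
      rw [mul_pow, Real.sq_sqrt hr.1]
    rw [hcg]
    apply intervalIntegral.integral_mono_on zero_le_one
      (((hf'c.norm.pow 2).mul continuous_id').intervalIntegrable 0 1) hfH1
    intro r hr
    obtain ⟨hr0, _⟩ := hr
    have : (0:ℝ) ≤ (k : ℝ) ^ 2 / r ^ 2 * ‖f r‖ ^ 2 := by positivity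
    show ‖deriv f r‖ ^ 2 * r ≤ _
    nlinarith [norm_nonneg (deriv f r), norm_nonneg (f r)]
  have hQbound : |Q| ≤ wL2 f * wH1 k f := by
    calc |Q| ≤ ∫ r in (0:ℝ)..1, u r * v r := le_trans habs1 habs2
      _ ≤ Real.sqrt (∫ r in (0:ℝ)..1, u r ^ 2) * Real.sqrt (∫ r in (0:ℝ)..1, v r ^ 2) := habs3
      _ ≤ wL2 f * wH1 k f := by
          rw [hL2]
          exact mul_le_mul_of_nonneg_left hH1 (Real.sqrt_nonneg _)
  calc |(-α) * Q| = α * |Q| := by rw [abs_mul, abs_neg, abs_of_nonneg hα0]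
    _ ≤ α * (wL2 f * wH1 k f) := mul_le_mul_of_nonneg_left hQbound hα0
    _ = α * wL2 f * wH1 k f := by ring

end
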